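/- For a Bohr set B(Γ,δ) in a finite abelian group G, there is a set X ⊆ G with |X| ≤ 4^{|Γ|} such that B(Γ,2δ) ⊆ ⋃_{x ∈ X} (x + B(Γ,δ)). -/

import Mathlib

open Finset Real

lemma arg_exp_abs_le {θ : ℝ} (h : |θ| ≤ π) :
    |Complex.arg (Complex.exp (θ * Complex.I))| ≤ |θ| := by
  have h1 : -π ≤ θ := neg_le_of_abs_le h
  have h2 : θ ≤ π := le_of_abs_le h
  rcases eq_or_lt_of_le h1 with h3 | h3
  · have : (θ : ℂ) * Complex.I = (π : ℂ) * Complex.I - 2 * π * Complex.I := by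
      rw [← h3]; push_cast; ring
    rw [this, Complex.exp_sub, Complex.exp_pi_mul_I]
    have : Complex.exp (2 * π * Complex.I) = 1 := by
      simpa using Complex.exp_int_mul_two_pi_mul_I 1
    rw [this, div_one, Complex.arg_neg_one, ← h3]
    simp [abs_of_pos Real.pi_pos]
  · rw [Complex.exp_mul_I, Complex.arg_cos_add_sin_mul_I ⟨h3, h2⟩]

lemma arg_div_abs_le {z w : ℂ} (hz : ‖z‖ = 1) (hw : ‖w‖ = 1)
    (h : |Complex.arg z - Complex.arg w| ≤ π) :
    |Complex.arg (z / w)| ≤ |Complex.arg z - Complex.arg w| := by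
  have hz' := Complex.norm_mul_exp_arg_mul_I z
  have hw' := Complex.norm_mul_exp_arg_mul_I w
  rw [hz, Complex.ofReal_one, one_mul] at hz'
  rw [hw, Complex.ofReal_one, one_mul] at hw'
  have hzw : Complex.exp ((↑(Complex.arg z - Complex.arg w)) * Complex.I) = z / w := by
    rw [Complex.ofReal_sub, sub_mul, Complex.exp_sub, hz', hw']
  rw [← hzw]
  exact arg_exp_abs_le h

/-- A Bohr set `B(Γ,2δ)` can be covered by at most `4^|Γ|` translates of `B(Γ,δ)`. -/
theorem stmt4 {G : Type*} [AddCommGroup G] [Fintype G]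
    (Γ : Finset (AddChar G ℂ)) (δ : ℝ) (hδ0 : 0 < δ) (hδ1 : δ ≤ 1) :
    ∃ X : Finset G, X.card ≤ 4 ^ Γ.card ∧
      ∀ y : G, (∀ γ ∈ Γ, |Complex.arg (γ y)| / (2 * π) ≤ 2 * δ) →
        ∃ x ∈ X, ∀ γ ∈ Γ, |Complex.arg (γ (y - x))| / (2 * π) ≤ δ := by
  classical
  have hπ : (0:ℝ) < π := Real.pi_pos
  have habs1 : ∀ (γ : AddChar G ℂ) (x : G), ‖γ x‖ = 1 := fun γ x => by
    exact AddChar.norm_apply γ x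
  rcases le_or_gt δ (1/2 : ℝ) with hhalf | hhalf
  swap
  · -- trivial case: δ > 1/2, a single translate suffices
    refine ⟨{0}, by simpa using Nat.one_le_pow _ _ (by norm_num), fun y _ => ⟨0, mem_singleton_self 0, fun γ _ => ?_⟩⟩
    have h1 : |Complex.arg (γ (y - 0))| ≤ π := Complex.abs_arg_le_pi _
    rw [div_le_iff₀ (by positivity)]
    nlinarith
  -- main case: δ ≤ 1/2
  set P : G → Prop := fun y => ∀ γ ∈ Γ, |Complex.arg (γ y)| / (2 * π) ≤ 2 * δ with hP
  set S : Finset G := univ.filter P with hS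
  set f : G → (↥Γ → Fin 4) := fun y γ =>
    ⟨((⌊Complex.arg (γ.1 y) / (2 * π * δ)⌋ ⊓ 1) + 2).toNat % 4,
      Nat.mod_lt _ (by norm_num)⟩ with hf
  -- bucket facts for elements of the Bohr set B(Γ,2δ)
  have hbucket : ∀ y ∈ S, ∀ γ : ↥Γ,
      ((⌊Complex.arg (γ.1 y) / (2 * π * δ)⌋ ⊓ 1) : ℝ) ≤ Complex.arg (γ.1 y) / (2 * π * δ) ∧
      Complex.arg (γ.1 y) / (2 * π * δ) ≤ ((⌊Complex.arg (γ.1 y) / (2 * π * δ)⌋ ⊓ 1) : ℝ) + 1 ∧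
      -2 ≤ (⌊Complex.arg (γ.1 y) / (2 * π * δ)⌋ ⊓ 1) ∧
      (⌊Complex.arg (γ.1 y) / (2 * π * δ)⌋ ⊓ 1) ≤ 1 := by
    intro y hy γ
    have hyP : P y := (mem_filter.mp hy).2
    have harg : |Complex.arg (γ.1 y)| / (2 * π) ≤ 2 * δ := hyP γ.1 γ.2
    set t : ℝ := Complex.arg (γ.1 y) / (2 * π * δ) with ht
    have h2πδ : (0:ℝ) < 2 * π * δ := by positivity
    have htabs : |t| ≤ 2 := by
      rw [ht, abs_div, abs_of_pos h2πδ, div_le_iff₀ h2πδ]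
      rw [div_le_iff₀ (by positivity)] at harg
      nlinarith
    have ht2 : -2 ≤ t := neg_le_of_abs_le htabs
    have ht2' : t ≤ 2 := le_of_abs_le htabs
    have hfl : (-2 : ℤ) ≤ ⌊t⌋ := by exact_mod_cast Int.le_floor.mpr (by exact_mod_cast ht2)
    refine ⟨le_trans inf_le_left (Int.floor_le t), ?_, le_inf hfl (by norm_num), inf_le_right⟩
    rcases le_or_gt ⌊t⌋ 1 with hc | hc
    · rw [inf_eq_left.mpr (show ((⌊t⌋ : ℝ)) ≤ 1 by exact_mod_cast hc)]
      exact le_of_lt (Int.lt_floor_add_one t)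
    · rw [inf_eq_right.mpr (show (1 : ℝ) ≤ (⌊t⌋ : ℝ) by exact_mod_cast hc.le)]
      norm_num
      exact ht2'
  -- same bucket implies close arguments
  have hclose : ∀ x ∈ S, ∀ y ∈ S, f x = f y → ∀ γ : ↥Γ,
      |Complex.arg (γ.1 y) - Complex.arg (γ.1 x)| ≤ 2 * π * δ := by
    intro x hx y hy hfxy γ
    obtain ⟨hx1, hx2, hx3, hx4⟩ := hbucket x hx γ
    obtain ⟨hy1, hy2, hy3, hy4⟩ := hbucket y hy γ
    have hval : (((⌊Complex.arg (γ.1 x) / (2 * π * δ)⌋ ⊓ 1) + 2).toNat % 4 : ℕ) =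
        (((⌊Complex.arg (γ.1 y) / (2 * π * δ)⌋ ⊓ 1) + 2).toNat % 4 : ℕ) := by
      have := congrFun hfxy γ
      simpa [hf, Fin.ext_iff] using this
    have hn : (⌊Complex.arg (γ.1 x) / (2 * π * δ)⌋ ⊓ 1)
        = (⌊Complex.arg (γ.1 y) / (2 * π * δ)⌋ ⊓ 1) := by omega
    have hnR : ((⌊Complex.arg (γ.1 x) / (2 * π * δ)⌋ : ℝ) ⊓ 1)
        = ((⌊Complex.arg (γ.1 y) / (2 * π * δ)⌋ : ℝ) ⊓ 1) := by
      have h' := congrArg (fun n : ℤ => ((n : ℝ))) hn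
      push_cast at h'
      exact h'
    have h2πδ : (0:ℝ) < 2 * π * δ := by positivity
    rw [abs_sub_le_iff]
    constructor
    · have h1 : Complex.arg (γ.1 y) / (2 * π * δ) - Complex.arg (γ.1 x) / (2 * π * δ) ≤ 1 := by
        linarith [hy2, hx1, hnR]
      rw [div_sub_div_same, div_le_one h2πδ] at h1
      linarith
    · have h1 : Complex.arg (γ.1 x) / (2 * π * δ) - Complex.arg (γ.1 y) / (2 * π * δ) ≤ 1 := by
        linarith [hx2, hy1, hnR]
      rw [div_sub_div_same, div_le_one h2πδ] at h1
      linarith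
  -- choose representatives
  set rep : (↥Γ → Fin 4) → G := fun b => if h : ∃ y ∈ S, f y = b then h.choose else 0 with hrep
  refine ⟨(S.image f).image rep, ?_, ?_⟩
  · calc ((S.image f).image rep).card ≤ (S.image f).card := card_image_le
      _ ≤ Fintype.card (↥Γ → Fin 4) := by
          simpa using card_le_univ (S.image f)
      _ = 4 ^ Γ.card := by simp [Fintype.card_fun]
  · intro y hy
    have hyS : y ∈ S := mem_filter.mpr ⟨mem_univ y, hy⟩
    have hex : ∃ y' ∈ S, f y' = f y := ⟨y, hyS, rfl⟩
    refine ⟨rep (f y), mem_image.mpr ⟨f y, mem_image.mpr ⟨y, hyS, rfl⟩, rfl⟩, ?_⟩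
    have hx : rep (f y) ∈ S ∧ f (rep (f y)) = f y := by
      rw [hrep]
      simp only [dif_pos hex]
      exact hex.choose_spec
    intro γ hγ
    have hcl := hclose (rep (f y)) hx.1 y hyS hx.2 ⟨γ, hγ⟩
    simp only at hcl
    have hle : |Complex.arg (γ y) - Complex.arg (γ (rep (f y)))| ≤ π := by
      calc |Complex.arg (γ y) - Complex.arg (γ (rep (f y)))| ≤ 2 * π * δ := hcl
        _ ≤ π := by nlinarith
    have hdiv : γ (y - rep (f y)) = γ y / γ (rep (f y)) := AddChar.map_sub_eq_div γ _ _
    rw [hdiv, div_le_iff₀ (by positivity)]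
    calc |Complex.arg (γ y / γ (rep (f y)))|
        ≤ |Complex.arg (γ y) - Complex.arg (γ (rep (f y)))| :=
          arg_div_abs_le (habs1 γ y) (habs1 γ _) hle
      _ ≤ 2 * π * δ := hcl
      _ = δ * (2 * π) := by ring
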